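/- Let P ∈ ℝ^{n×n} be a row-stochastic matrix with stationary distribution π (π^T P = π^T, all π_i > 0), π_min = min_i π_i, and stationary frequency matrix F = diag(π) P. Let π̂ ∈ ℝ^n and F̂ ∈ ℝ^{n×n} satisfy ‖π̂ − π‖_∞ ≤ ε and ‖F̂ − F‖ ≤ ε for some 0 < ε ≤ π_min/2 (so in particular min_i π̂_i ≥ π_min/2 > 0), and define P̂ = diag(π̂)^{-1} F̂. Then ‖P̂ − P‖ ≤ 4 π_min^{-1} ‖P‖ ε, where ‖·‖ denotes the spectral norm and ‖·‖_∞ the entrywise max norm of a vector. -/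

import Mathlib

open scoped BigOperators
open Matrix

noncomputable section

namespace MJ

/-- Euclidean (ℓ2) norm of a finite vector. -/
def l2 {k : ℕ} (v : Fin k → ℝ) : ℝ := Real.sqrt (∑ j, v j ^ 2)

/-- ℓ1 norm of a finite vector. -/
def l1 {k : ℕ} (v : Fin k → ℝ) : ℝ := ∑ i, |v i|

/-- Maximum absolute row sum (matrix ∞-norm). -/
def rowSumNorm {m k : ℕ} (A : Matrix (Fin m) (Fin k) ℝ) : ℝ := ⨆ i, ∑ j, |A i j|

/-- Frobenius norm. -/
def frob {m k : ℕ} (A : Matrix (Fin m) (Fin k) ℝ) : ℝ := Real.sqrt (∑ i, ∑ j, A i j ^ 2)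

/-- Spectral norm (ℓ2 operator norm). -/
def spec {m k : ℕ} (A : Matrix (Fin m) (Fin k) ℝ) : ℝ :=
  sSup {c : ℝ | ∃ x : Fin k → ℝ, l2 x ≤ 1 ∧ c = l2 (A.mulVec x)}

/-- `i`-th largest singular value (1-indexed), via Courant–Fischer max-min. -/
def singVal {m k : ℕ} (A : Matrix (Fin m) (Fin k) ℝ) (i : ℕ) : ℝ :=
  sSup {c : ℝ | ∃ V : Submodule ℝ (Fin k → ℝ), Module.finrank ℝ V = i ∧
    ∀ x ∈ V, c * l2 x ≤ l2 (A.mulVec x)}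

/-- Row-stochastic matrix. -/
def RowStochastic {k : ℕ} (P : Matrix (Fin k) (Fin k) ℝ) : Prop :=
  (∀ i j, 0 ≤ P i j) ∧ ∀ i, ∑ j, P i j = 1

/-- Probability vector. -/
def IsProbVec {k : ℕ} (v : Fin k → ℝ) : Prop := (∀ i, 0 ≤ v i) ∧ ∑ i, v i = 1

/-- Stationary distribution: a probability vector with πᵀ P = πᵀ. -/
def IsStationary {k : ℕ} (P : Matrix (Fin k) (Fin k) ℝ) (piv : Fin k → ℝ) : Prop :=
  IsProbVec piv ∧ ∀ j, ∑ i, piv i * P i j = piv j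

/-- Ergodicity (irreducible + aperiodic ⟺ primitive for finite chains). -/
def Ergodic' {k : ℕ} (P : Matrix (Fin k) (Fin k) ℝ) : Prop :=
  ∃ t : ℕ, ∀ i j, 0 < (P ^ t) i j

/-- ε-mixing time: τ(ε) = min{t : max_i (1/2)‖(P^t)(i,:) − π‖₁ ≤ ε}. -/
def mixingTime {k : ℕ} (P : Matrix (Fin k) (Fin k) ℝ) (piv : Fin k → ℝ) (ε : ℝ) : ℕ :=
  sInf {t : ℕ | ∀ i, (1/2) * ∑ j, |(P ^ t) i j - piv j| ≤ ε}

/-- Full SVD decomposition predicate: A = U S Vᵀ with U, V orthogonal and S diagonal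
with nonnegative entries arranged in descending order. -/
def IsSVD {m k : ℕ} (A : Matrix (Fin m) (Fin k) ℝ) (U : Matrix (Fin m) (Fin m) ℝ)
    (S : Matrix (Fin m) (Fin k) ℝ) (V : Matrix (Fin k) (Fin k) ℝ) : Prop :=
  Uᵀ * U = 1 ∧ Vᵀ * V = 1 ∧ A = U * S * Vᵀ ∧
  (∀ (i : Fin m) (j : Fin k), (i : ℕ) ≠ (j : ℕ) → S i j = 0) ∧
  (∀ i j, 0 ≤ S i j) ∧
  (∀ (a b : ℕ) (ham : a < m) (hak : a < k) (hbm : b < m) (hbk : b < k),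
    a ≤ b → S ⟨b, hbm⟩ ⟨b, hbk⟩ ≤ S ⟨a, ham⟩ ⟨a, hak⟩)

/-- `Ur` consists of the first `r` left singular vectors of `A`. -/
def IsLeftSingTrunc {m k : ℕ} (A : Matrix (Fin m) (Fin k) ℝ) (r : ℕ)
    (Ur : Matrix (Fin m) (Fin r) ℝ) : Prop :=
  ∃ U S V, IsSVD A U S V ∧ ∃ h : r ≤ m, ∀ (i : Fin m) (j : Fin r),
    Ur i j = U i ⟨(j : ℕ), lt_of_lt_of_le j.isLt h⟩

/-- `Vr` consists of the first `r` right singular vectors of `A`. -/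
def IsRightSingTrunc {m k : ℕ} (A : Matrix (Fin m) (Fin k) ℝ) (r : ℕ)
    (Vr : Matrix (Fin k) (Fin r) ℝ) : Prop :=
  IsLeftSingTrunc Aᵀ r Vr

/-- The matrix (I − EEᵀ)(FFᵀ), whose spectral/Frobenius norm is the sinΘ distance
between the column spaces of `E` and `F` (for `E`, `F` with orthonormal columns). -/
def sinThetaMat {k r : ℕ} (E F : Matrix (Fin k) (Fin r) ℝ) : Matrix (Fin k) (Fin k) ℝ :=
  (1 - E * Eᵀ) * (F * Fᵀ)

/-- Membership matrix: each row has exactly one entry 1 and all others 0. -/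
def IsMembership {k r : ℕ} (M : Matrix (Fin k) (Fin r) ℝ) : Prop :=
  ∀ i, ∃ j, M i j = 1 ∧ ∀ j', j' ≠ j → M i j' = 0

/-- A family of finsets forming a partition of `Fin k`. -/
def IsPartition {k r : ℕ} (Ω : Fin r → Finset (Fin k)) : Prop :=
  (∀ a b, a ≠ b → Disjoint (Ω a) (Ω b)) ∧ Finset.univ.biUnion Ω = Finset.univ

/-- `P` is aggregatable w.r.t. partition `Ω`: rows within the same cluster coincide. -/
def Aggregatable {k r : ℕ} (P : Matrix (Fin k) (Fin k) ℝ) (Ω : Fin r → Finset (Fin k)) : Prop :=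
  ∀ s, ∀ i ∈ Ω s, ∀ j ∈ Ω s, ∀ c, P i c = P j c

/-- Misclustering rate: min over bijections of the relative misclustering counts. -/
def MR {k r : ℕ} (Ω Ωh : Fin r → Finset (Fin k)) : ℝ :=
  ⨅ σ : Equiv.Perm (Fin r), ∑ j, (((Ω j) \ (Ωh (σ j))).card : ℝ) / ((Ω j).card : ℝ)

/-- k-means objective on the rows of `U`. -/
def kmeansObj {k r : ℕ} (U : Matrix (Fin k) (Fin r) ℝ) (Ωh : Fin r → Finset (Fin k))
    (c : Fin r → Fin r → ℝ) : ℝ :=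
  ∑ s, ∑ i ∈ Ωh s, ∑ j, (U i j - c s j) ^ 2

/-- Optimal value of the k-means problem on the rows of `U`. -/
def kmeansOpt {k r : ℕ} (U : Matrix (Fin k) (Fin r) ℝ) : ℝ :=
  sInf {v : ℝ | ∃ Ωh c, IsPartition Ωh ∧ v = kmeansObj U Ωh c}

/-- A (1+ε) approximate solution of the k-means problem on the rows of `U`. -/
def IsApproxKMeans {k r : ℕ} (U : Matrix (Fin k) (Fin r) ℝ) (ε : ℝ)
    (Ωh : Fin r → Finset (Fin k)) (c : Fin r → Fin r → ℝ) : Prop :=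
  IsPartition Ωh ∧ kmeansObj U Ωh c ≤ (1 + ε) * kmeansOpt U

/-- Optimal value of the k-means problem in membership-matrix form. -/
def kmeansOptM {k r : ℕ} (U : Matrix (Fin k) (Fin r) ℝ) : ℝ :=
  sInf {v : ℝ | ∃ (M : Matrix (Fin k) (Fin r) ℝ) (C : Matrix (Fin r) (Fin r) ℝ),
    IsMembership M ∧ v = frob (M * C - U) ^ 2}

/-- Number of t ∈ {1,…,N} with x_{t−1} = i. -/
def countState {k N : ℕ} (x : Fin (N+1) → Fin k) (i : Fin k) : ℕ :=
  (Finset.univ.filter fun t : Fin N => x t.castSucc = i).card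

/-- Number of t ∈ {1,…,N} with x_{t−1} = i and x_t = j. -/
def countTrans {k N : ℕ} (x : Fin (N+1) → Fin k) (i j : Fin k) : ℕ :=
  (Finset.univ.filter fun t : Fin N => x t.castSucc = i ∧ x t.succ = j).card

/-- Empirical state distribution. -/
def empPi {k N : ℕ} (x : Fin (N+1) → Fin k) (i : Fin k) : ℝ :=
  (countState x i : ℝ) / (N : ℝ)

/-- Empirical frequency matrix. -/
def empF {k N : ℕ} (x : Fin (N+1) → Fin k) : Matrix (Fin k) (Fin k) ℝ :=
  Matrix.of fun i j => (countTrans x i j : ℝ) / (N : ℝ)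

/-- Empirical transition matrix (uniform row if a state never occurs). -/
def empMatrix {k N : ℕ} (x : Fin (N+1) → Fin k) : Matrix (Fin k) (Fin k) ℝ :=
  Matrix.of fun i j =>
    if countState x i = 0 then 1 / (k : ℝ)
    else (countTrans x i j : ℝ) / (countState x i : ℝ)

/-- Probability weight of a finite Markov-chain path with initial distribution `pi0`. -/
def pathWeight {k : ℕ} (N : ℕ) (P : Matrix (Fin k) (Fin k) ℝ) (pi0 : Fin k → ℝ)
    (x : Fin (N+1) → Fin k) : ℝ :=
  pi0 (x 0) * ∏ t : Fin N, P (x t.castSucc) (x t.succ)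

/-- Probability of an event over Markov-chain trajectories of length N+1. -/
def pathProb {k : ℕ} (N : ℕ) (P : Matrix (Fin k) (Fin k) ℝ) (pi0 : Fin k → ℝ)
    (E : Set ((Fin (N+1)) → Fin k)) : ℝ :=
  ∑ x : Fin (N+1) → Fin k, E.indicator (pathWeight N P pi0) x

end MJ
open MJ

namespace MJaux

lemma l2_nonneg {k : ℕ} (v : Fin k → ℝ) : 0 ≤ l2 v := Real.sqrt_nonneg _

lemma sum_sq_le_one {k : ℕ} {v : Fin k → ℝ} (h : l2 v ≤ 1) : ∑ j, v j ^ 2 ≤ 1 := by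
  have h0 : 0 ≤ ∑ j, v j ^ 2 := Finset.sum_nonneg fun j _ => sq_nonneg _
  have h' : Real.sqrt (∑ j, v j ^ 2) ≤ 1 := h
  nlinarith [Real.sq_sqrt h0, Real.sqrt_nonneg (∑ j, v j ^ 2)]

lemma l2_add_le {k : ℕ} (u v : Fin k → ℝ) : l2 (u + v) ≤ l2 u + l2 v := by
  have : ∀ w : Fin k → ℝ, l2 w = ‖(WithLp.equiv 2 (Fin k → ℝ)).symm w‖ := by
    intro w
    rw [EuclideanSpace.norm_eq]
    simp [l2, sq_abs]
  rw [this, this, this]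
  exact norm_add_le _ _

lemma l2_smul_le {k : ℕ} (d v : Fin k → ℝ) (c : ℝ) (hc : 0 ≤ c) (hd : ∀ i, |d i| ≤ c) :
    l2 (fun i => d i * v i) ≤ c * l2 v := by
  unfold l2
  have : ∑ j, (d j * v j) ^ 2 ≤ c ^ 2 * ∑ j, v j ^ 2 := by
    rw [Finset.mul_sum]
    refine Finset.sum_le_sum fun j _ => ?_
    have : d j ^ 2 ≤ c ^ 2 := sq_le_sq' (neg_le_of_abs_le (hd j)) (le_of_abs_le (hd j))
    nlinarith [sq_nonneg (v j)]
  calc Real.sqrt (∑ j, (d j * v j) ^ 2) ≤ Real.sqrt (c ^ 2 * ∑ j, v j ^ 2) :=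
        Real.sqrt_le_sqrt this
    _ = c * Real.sqrt (∑ j, v j ^ 2) := by
        rw [Real.sqrt_mul (sq_nonneg c), Real.sqrt_sq hc]

lemma mulVec_l2_le {m k : ℕ} (A : Matrix (Fin m) (Fin k) ℝ) (x : Fin k → ℝ) (hx : l2 x ≤ 1) :
    l2 (A.mulVec x) ≤ Real.sqrt (∑ i, ∑ j, A i j ^ 2) := by
  unfold l2
  apply Real.sqrt_le_sqrt
  calc ∑ i, (A.mulVec x i) ^ 2
      ≤ ∑ i, (∑ j, A i j ^ 2) * (∑ j, x j ^ 2) := by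
        refine Finset.sum_le_sum fun i _ => ?_
        simpa [Matrix.mulVec, dotProduct] using
          Finset.sum_mul_sq_le_sq_mul_sq Finset.univ (A i) x
    _ ≤ ∑ i, ∑ j, A i j ^ 2 := by
        refine Finset.sum_le_sum fun i _ => ?_
        have h1 : 0 ≤ ∑ j, A i j ^ 2 := Finset.sum_nonneg fun j _ => sq_nonneg _
        nlinarith [sum_sq_le_one hx]

lemma spec_bddAbove {m k : ℕ} (A : Matrix (Fin m) (Fin k) ℝ) :
    BddAbove {c : ℝ | ∃ x : Fin k → ℝ, l2 x ≤ 1 ∧ c = l2 (A.mulVec x)} :=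
  ⟨Real.sqrt (∑ i, ∑ j, A i j ^ 2), by rintro c ⟨x, hx, rfl⟩; exact mulVec_l2_le A x hx⟩

lemma le_spec {m k : ℕ} (A : Matrix (Fin m) (Fin k) ℝ) (x : Fin k → ℝ) (hx : l2 x ≤ 1) :
    l2 (A.mulVec x) ≤ spec A :=
  le_csSup (spec_bddAbove A) ⟨x, hx, rfl⟩

lemma spec_le {m k : ℕ} (A : Matrix (Fin m) (Fin k) ℝ) (c : ℝ)
    (h : ∀ x : Fin k → ℝ, l2 x ≤ 1 → l2 (A.mulVec x) ≤ c) : spec A ≤ c := by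
  refine csSup_le ⟨l2 (A.mulVec 0), 0, by simp [l2], rfl⟩ ?_
  rintro b ⟨x, hx, rfl⟩
  exact h x hx

end MJaux

open MJ in
/-- transition-matrix error from frequency-matrix and distribution errors. -/
theorem stmt14 {n : ℕ} (P : Matrix (Fin n) (Fin n) ℝ) (piv : Fin n → ℝ)
    (hP : RowStochastic P) (hpos : ∀ i, 0 < piv i) (hpiv : IsStationary P piv)
    (pimin : ℝ) (hpimin : pimin = ⨅ i, piv i)
    (pih : Fin n → ℝ) (Fh : Matrix (Fin n) (Fin n) ℝ)
    (ε : ℝ) (hε : 0 < ε) (hεle : ε ≤ pimin / 2)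
    (hpih : ∀ i, |pih i - piv i| ≤ ε)
    (hFh : spec (Fh - Matrix.diagonal piv * P) ≤ ε) :
    spec (Matrix.diagonal (fun i => (pih i)⁻¹) * Fh - P) ≤ 4 * pimin⁻¹ * spec P * ε := by
  have hpm : 0 < pimin := by linarith
  rcases Nat.eq_zero_or_pos n with hn | hn
  · exfalso
    subst hn
    have : pimin = 0 := by
      rw [hpimin, iInf, Set.range_eq_empty, Real.sInf_empty]
    linarith
  have hbdd : BddBelow (Set.range piv) := (Set.finite_range piv).bddBelow
  have hle : ∀ i, pimin ≤ piv i := fun i => hpimin ▸ ciInf_le hbdd i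
  have hpihpos : ∀ i, pimin / 2 ≤ pih i := by
    intro i
    have h1 := (abs_le.1 (hpih i)).1
    have h2 := hle i
    linarith
  have hpih0 : ∀ i, 0 < pih i := fun i => lt_of_lt_of_le (by linarith) (hpihpos i)
  have hc1 : ∀ i, |(pih i)⁻¹| ≤ 2 / pimin := by
    intro i
    rw [abs_of_pos (inv_pos.2 (hpih0 i)), show (2:ℝ)/pimin = (pimin/2)⁻¹ by
      rw [inv_div]]
    exact inv_anti₀ (by linarith) (hpihpos i)
  have hc2 : ∀ i, |piv i * (pih i)⁻¹ - 1| ≤ 2 * ε / pimin := by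
    intro i
    have h0 := hpih0 i
    have heq : piv i * (pih i)⁻¹ - 1 = (piv i - pih i) / pih i := by
      field_simp
    rw [heq, abs_div, abs_of_pos h0, div_le_iff₀ h0]
    have h1 : |piv i - pih i| ≤ ε := by rw [abs_sub_comm]; exact hpih i
    have h2 := hpihpos i
    calc |piv i - pih i| ≤ ε := h1
      _ ≤ 2 * ε / pimin * pih i := by
          rw [div_mul_eq_mul_div, le_div_iff₀ hpm]
          nlinarith
  -- spec P ≥ 1
  have hn0 : (0:ℝ) < (n:ℝ) := by exact_mod_cast hn
  set x0 : Fin n → ℝ := fun _ => (Real.sqrt n)⁻¹ with hx0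
  have hsq : (Real.sqrt n) ^ 2 = (n:ℝ) := Real.sq_sqrt hn0.le
  have hl2x0 : l2 x0 = 1 := by
    unfold l2
    rw [show (∑ j : Fin n, x0 j ^ 2) = (1:ℝ) by
      simp only [hx0, inv_pow, hsq, Finset.sum_const, Finset.card_univ, Fintype.card_fin,
        nsmul_eq_mul]
      field_simp]
    exact Real.sqrt_one
  have hPx0 : P.mulVec x0 = x0 := by
    funext i
    simp only [Matrix.mulVec, dotProduct, hx0]
    rw [← Finset.sum_mul, hP.2 i, one_mul]
  have hspecP : 1 ≤ spec P := by
    have := MJaux.le_spec P x0 (le_of_eq hl2x0)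
    rwa [hPx0, hl2x0] at this
  have key : spec (Matrix.diagonal (fun i => (pih i)⁻¹) * Fh - P)
      ≤ 2 / pimin * ε + 2 * ε / pimin * spec P := by
    apply MJaux.spec_le
    intro x hx
    set w := (Fh - Matrix.diagonal piv * P).mulVec x with hw
    set p := P.mulVec x with hp
    have hdecomp : (Matrix.diagonal (fun i => (pih i)⁻¹) * Fh - P).mulVec x
        = (fun i => (pih i)⁻¹ * w i) + (fun i => (piv i * (pih i)⁻¹ - 1) * p i) := by
      funext i
      have hwi : w i = Fh.mulVec x i - piv i * p i := by
        rw [hw, Matrix.sub_mulVec]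
        simp only [Pi.sub_apply]
        rw [← Matrix.mulVec_mulVec, Matrix.mulVec_diagonal, hp]
      have hli : (Matrix.diagonal (fun i => (pih i)⁻¹) * Fh - P).mulVec x i
          = (pih i)⁻¹ * Fh.mulVec x i - p i := by
        rw [Matrix.sub_mulVec]
        simp only [Pi.sub_apply]
        rw [← Matrix.mulVec_mulVec, Matrix.mulVec_diagonal, hp]
      rw [Pi.add_apply, hli, hwi]
      ring
    rw [hdecomp]
    have hεp : (0:ℝ) ≤ 2 / pimin := by positivity
    have hc2p : (0:ℝ) ≤ 2 * ε / pimin := by positivity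
    calc l2 ((fun i => (pih i)⁻¹ * w i) + fun i => (piv i * (pih i)⁻¹ - 1) * p i)
        ≤ l2 (fun i => (pih i)⁻¹ * w i) + l2 (fun i => (piv i * (pih i)⁻¹ - 1) * p i) :=
          MJaux.l2_add_le _ _
      _ ≤ 2 / pimin * l2 w + 2 * ε / pimin * l2 p :=
          add_le_add (MJaux.l2_smul_le _ _ _ hεp hc1) (MJaux.l2_smul_le _ _ _ hc2p hc2)
      _ ≤ 2 / pimin * ε + 2 * ε / pimin * spec P := by
          have h1 : l2 w ≤ ε := le_trans (MJaux.le_spec _ x hx) hFh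
          have h2 : l2 p ≤ spec P := MJaux.le_spec _ x hx
          have h3 := MJaux.l2_nonneg w
          have h4 := MJaux.l2_nonneg p
          nlinarith
  calc spec (Matrix.diagonal (fun i => (pih i)⁻¹) * Fh - P)
      ≤ 2 / pimin * ε + 2 * ε / pimin * spec P := key
    _ ≤ 4 * pimin⁻¹ * spec P * ε := by
        rw [div_mul_eq_mul_div, div_mul_eq_mul_div, ← add_div, div_le_iff₀ hpm]
        have hcancel : pimin⁻¹ * pimin = 1 := inv_mul_cancel₀ hpm.ne'
        nlinarith [mul_nonneg hε.le (sub_nonneg.2 hspecP),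
          mul_pos hε (lt_of_lt_of_le one_pos hspecP)]
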